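/- Let $\mathcal{H}$ be a $q$-uniform linear hypergraph on an $n$-element vertex set with $q^2 \ge 2n$ and $q \ge 1$. Then $q \cdot |\mathcal{H}| \le 2n$. -/
import Mathlib

lemma stmt_5_key {α : Type*} [DecidableEq α] {q : ℕ}
    (H : Finset (Finset α))
    (huniform : ∀ e ∈ H, e.card = q)
    (hlinear : ∀ e ∈ H, ∀ f ∈ H, e ≠ f → (e ∩ f).card ≤ 1) :
    ∀ S : Finset (Finset α), S ⊆ H →
      2 * S.card * q ≤ 2 * (S.biUnion id).card + S.card * (S.card - 1) := by
  intro S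
  induction S using Finset.induction_on with
  | empty => simp
  | @insert e S he ih =>
    intro hsub
    have heH : e ∈ H := hsub (Finset.mem_insert_self e S)
    have hSH : S ⊆ H := fun f hf => hsub (Finset.mem_insert_of_mem hf)
    have ih' := ih hSH
    set U := S.biUnion id with hU
    have hins : (insert e S).biUnion id = e ∪ U := by
      simp [Finset.biUnion_insert, hU]
    have h1 : (e ∪ U).card + (e ∩ U).card = e.card + U.card :=
      Finset.card_union_add_card_inter e U
    have h2 : (e ∩ U).card ≤ S.card := by
      have : e ∩ U = S.biUnion (fun f => e ∩ f) := by
        rw [hU, Finset.inter_biUnion]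
        simp
      rw [this]
      calc (S.biUnion fun f => e ∩ f).card ≤ ∑ f ∈ S, (e ∩ f).card :=
            Finset.card_biUnion_le
        _ ≤ ∑ f ∈ S, 1 := by
            apply Finset.sum_le_sum
            intro f hf
            apply hlinear e heH f (hSH hf)
            rintro rfl; exact he hf
        _ = S.card := by simp
    have hecard : e.card = q := huniform e heH
    rw [Finset.card_insert_of_notMem he, hins]
    have hkk : (S.card + 1) * (S.card + 1 - 1) = S.card * (S.card - 1) + 2 * S.card := by
      cases S.card with
      | zero => rfl
      | succ m => simp [Nat.succ_sub_one]; ring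
    rw [hkk]
    have hrw : 2 * (S.card + 1) * q = 2 * S.card * q + 2 * q := by ring
    rw [hrw]
    rw [hecard] at h1
    linarith

/-- A `q`-uniform linear hypergraph on an `n`-element vertex set with `q² ≥ 2n`
and `q ≥ 1` satisfies `q * |H| ≤ 2n`. -/
theorem stmt_5 {α : Type*} [Fintype α] [DecidableEq α] {n q : ℕ}
    (hq : 2 * n ≤ q ^ 2) (hq1 : 1 ≤ q)
    (hn : Fintype.card α = n) (H : Finset (Finset α))
    (huniform : ∀ e ∈ H, e.card = q)
    (hlinear : ∀ e ∈ H, ∀ f ∈ H, e ≠ f → (e ∩ f).card ≤ 1) :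
    q * H.card ≤ 2 * n := by
  have key := stmt_5_key H huniform hlinear
  have hcard_le : ∀ S : Finset (Finset α), (S.biUnion id).card ≤ n := by
    intro S
    rw [← hn]
    exact Finset.card_le_univ _
  -- First: H.card ≤ q
  have hm : H.card ≤ q := by
    by_contra h
    push_neg at h
    obtain ⟨S, hSH, hScard⟩ := Finset.exists_subset_card_eq (h : q + 1 ≤ H.card)
    have h1 := key S hSH
    rw [hScard] at h1
    have h2 := hcard_le S
    have hs : q + 1 - 1 = q := rfl
    rw [hs] at h1
    nlinarith
  have h1 := key H (subset_refl H)
  have h2 := hcard_le H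
  have h3 : H.card * (H.card - 1) ≤ H.card * (q - 1) :=
    Nat.mul_le_mul_left _ (Nat.sub_le_sub_right hm 1)
  have h4 : H.card * (q - 1) + H.card = H.card * q := by
    have : q - 1 + 1 = q := Nat.sub_add_cancel hq1
    calc H.card * (q - 1) + H.card = H.card * (q - 1 + 1) := by ring
      _ = H.card * q := by rw [this]
  have : q * H.card = H.card * q := Nat.mul_comm q H.card
  rw [this]
  linarith
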